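/- Assume Re a > 0. Define H(X,Y) = Σ_{m,n≥0} (b₁)_m (b₂)_n (−1)^{m k₁} (−t₁)_{m k₁} (−1)^{n k₂} (−t₂)_{n k₂} X^m Y^n / ((c₁)_m (c₂)_n m! n!) (a finite sum). Then 𝓕₂⁽¹⁾(a,b₁,b₂;c₁,c₂;t₁,t₂,k₁,k₂,x,y) = (1/Γ(a)) · ∫₀^∞ e^{−u} u^{a−1} H(u·x, u·y) du, where u^{a−1} is defined via the real logarithm on (0,∞). -/

import Mathlib

open Complex Finset

/-- Ascending Pochhammer symbol `(z)_j = z (z+1) ⋯ (z+j−1)`, with `(z)_0 = 1`. -/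
noncomputable def poch (z : ℂ) (j : ℕ) : ℂ := (ascPochhammer ℂ j).eval z

/-- The first discrete Appell function `𝓕₂⁽¹⁾(a,b₁,b₂;c₁,c₂;t₁,t₂,k₁,k₂,x,y)`.
Since `(−t₁)_{m k₁} = 0` once `m k₁ > t₁` and `(−t₂)_{n k₂} = 0` once `n k₂ > t₂`
(for `k₁, k₂ ≥ 1`), the doubly infinite sum reduces to this finite sum. -/
noncomputable def F2one (a b₁ b₂ c₁ c₂ : ℂ) (t₁ t₂ k₁ k₂ : ℕ) (x y : ℂ) : ℂ :=
  ∑ m ∈ Finset.range (t₁ + 1), ∑ n ∈ Finset.range (t₂ + 1),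
    poch a (m + n) * poch b₁ m * poch b₂ n * (-1 : ℂ) ^ (m * k₁) * poch (-(t₁ : ℂ)) (m * k₁)
      * (-1 : ℂ) ^ (n * k₂) * poch (-(t₂ : ℂ)) (n * k₂) * x ^ m * y ^ n
    / (poch c₁ m * poch c₂ n * (Nat.factorial m : ℂ) * (Nat.factorial n : ℂ))

open MeasureTheory

lemma gamma_add_nat_poch (a : ℂ) (ha : 0 < a.re) (j : ℕ) :
    Complex.Gamma (a + j) = poch a j * Complex.Gamma a := by
  induction j with
  | zero => simp [poch]
  | succ j ih =>
    have hne : a + (j : ℂ) ≠ 0 := by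
      intro h
      have : (a + (j : ℂ)).re = 0 := by rw [h]; simp
      simp only [Complex.add_re, Complex.natCast_re] at this
      have : (0:ℝ) ≤ (j : ℝ) := Nat.cast_nonneg j
      linarith
    have h2 : Complex.Gamma (a + (j + 1 : ℕ)) = (a + j) * Complex.Gamma (a + j) := by
      rw [show (a + ((j:ℕ)+1 : ℕ) : ℂ) = (a + j) + 1 by push_cast; ring]
      exact Complex.Gamma_add_one _ hne
    rw [h2, ih]
    have hp : poch a (j + 1) = poch a j * (a + j) := by
      simp [poch, ascPochhammer_succ_right]
    rw [hp]
    ring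

lemma integral_exp_mul_pow (a : ℂ) (ha : 0 < a.re) (j : ℕ) :
    ∫ u in Set.Ioi (0 : ℝ),
        Complex.exp (-(u : ℂ)) * (u : ℂ) ^ (a - 1) * (u : ℂ) ^ j
      = Complex.Gamma (a + j) := by
  have h1 : 0 < (a + j).re := by
    simp only [Complex.add_re, Complex.natCast_re]
    have : (0:ℝ) ≤ (j : ℝ) := Nat.cast_nonneg j
    linarith
  rw [Complex.Gamma_eq_integral h1, Complex.GammaIntegral]
  refine setIntegral_congr_fun measurableSet_Ioi (fun u hu => ?_)
  have hu0 : (0:ℝ) < u := hu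
  have hne : (u : ℂ) ≠ 0 := by exact_mod_cast hu0.ne'
  rw [show a + (j:ℂ) - 1 = (a - 1) + (j:ℂ) by ring,
    Complex.cpow_add _ _ hne, Complex.cpow_natCast]
  rw [show ((Real.exp (-u) : ℝ) : ℂ) = Complex.exp (-(u:ℂ)) by
    rw [Complex.ofReal_exp]; push_cast; ring_nf]
  ring

/-- Laplace-type integral representation of `𝓕₂⁽¹⁾` with respect to the parameter `a`. -/
theorem integral_representation_laplace_a (a b₁ b₂ c₁ c₂ x y : ℂ) (k₁ k₂ : ℕ)
    (hk₁ : 0 < k₁) (hk₂ : 0 < k₂)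
    (hc₁ : ∀ n : ℕ, c₁ ≠ -(n : ℂ)) (hc₂ : ∀ n : ℕ, c₂ ≠ -(n : ℂ))
    (t₁ t₂ : ℕ) (ha : 0 < a.re)
    (H : ℂ → ℂ → ℂ)
    (hH : ∀ X Y : ℂ, H X Y =
      ∑ m ∈ Finset.range (t₁ + 1), ∑ n ∈ Finset.range (t₂ + 1),
        poch b₁ m * poch b₂ n * (-1 : ℂ) ^ (m * k₁) * poch (-(t₁ : ℂ)) (m * k₁)
          * (-1 : ℂ) ^ (n * k₂) * poch (-(t₂ : ℂ)) (n * k₂) * X ^ m * Y ^ n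
        / (poch c₁ m * poch c₂ n * (Nat.factorial m : ℂ) * (Nat.factorial n : ℂ))) :
    F2one a b₁ b₂ c₁ c₂ t₁ t₂ k₁ k₂ x y =
      (1 / Complex.Gamma a) *
        ∫ u in Set.Ioi (0 : ℝ),
          Complex.exp (-(u : ℂ)) * (u : ℂ) ^ (a - 1) * H ((u : ℂ) * x) ((u : ℂ) * y) := by
  classical
  have hΓ : Complex.Gamma a ≠ 0 := Complex.Gamma_ne_zero_of_re_pos ha
  -- coefficient
  set K : ℕ → ℕ → ℂ := fun m n =>
    poch b₁ m * poch b₂ n * (-1 : ℂ) ^ (m * k₁) * poch (-(t₁ : ℂ)) (m * k₁)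
      * (-1 : ℂ) ^ (n * k₂) * poch (-(t₂ : ℂ)) (n * k₂) * x ^ m * y ^ n
    / (poch c₁ m * poch c₂ n * (Nat.factorial m : ℂ) * (Nat.factorial n : ℂ)) with hK
  have hre : ∀ m n : ℕ, 0 < (a + ((m + n : ℕ) : ℂ)).re := by
    intro m n
    simp only [Complex.add_re, Complex.natCast_re]
    have : (0:ℝ) ≤ ((m + n : ℕ) : ℝ) := Nat.cast_nonneg _
    linarith
  -- pointwise rewriting of the integrand
  have hpt : ∀ u : ℝ,
      Complex.exp (-(u : ℂ)) * (u : ℂ) ^ (a - 1) * H ((u : ℂ) * x) ((u : ℂ) * y)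
      = ∑ m ∈ Finset.range (t₁ + 1), ∑ n ∈ Finset.range (t₂ + 1),
          K m n * (Complex.exp (-(u : ℂ)) * (u : ℂ) ^ (a - 1) * (u : ℂ) ^ (m + n)) := by
    intro u
    rw [hH]
    rw [Finset.mul_sum]
    refine Finset.sum_congr rfl (fun m _ => ?_)
    rw [Finset.mul_sum]
    refine Finset.sum_congr rfl (fun n _ => ?_)
    rw [hK]
    simp only [mul_pow, pow_add]
    ring
  have hint : ∀ m n : ℕ,
      IntegrableOn
        (fun u : ℝ => K m n * (Complex.exp (-(u : ℂ)) * (u : ℂ) ^ (a - 1) * (u : ℂ) ^ (m + n)))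
        (Set.Ioi (0 : ℝ)) := by
    intro m n
    have h := Complex.GammaIntegral_convergent (hre m n)
    refine ((h.congr_fun (fun u hu => ?_) measurableSet_Ioi).const_mul (K m n))
    have hu0 : (0:ℝ) < u := hu
    have hne : (u : ℂ) ≠ 0 := by exact_mod_cast hu0.ne'
    rw [show a + ((m + n : ℕ):ℂ) - 1 = (a - 1) + ((m+n:ℕ):ℂ) by ring,
      Complex.cpow_add _ _ hne, Complex.cpow_natCast]
    rw [show ((Real.exp (-u) : ℝ) : ℂ) = Complex.exp (-(u:ℂ)) by
      rw [Complex.ofReal_exp]; push_cast; ring_nf]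
    ring
  calc
    F2one a b₁ b₂ c₁ c₂ t₁ t₂ k₁ k₂ x y
        = ∑ m ∈ Finset.range (t₁ + 1), ∑ n ∈ Finset.range (t₂ + 1),
            (1 / Complex.Gamma a) * (K m n * Complex.Gamma (a + ((m + n : ℕ) : ℂ))) := by
          rw [F2one]
          refine Finset.sum_congr rfl fun m _ => Finset.sum_congr rfl fun n _ => ?_
          rw [gamma_add_nat_poch a ha (m + n)]
          have hc : (1 / Complex.Gamma a) * (K m n * (poch a (m + n) * Complex.Gamma a))
              = poch a (m + n) * K m n := by
            field_simp
          rw [hc, hK]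
          ring
    _ = (1 / Complex.Gamma a) *
        ∫ u in Set.Ioi (0 : ℝ),
          Complex.exp (-(u : ℂ)) * (u : ℂ) ^ (a - 1) * H ((u : ℂ) * x) ((u : ℂ) * y) := by
      rw [show (∫ u in Set.Ioi (0 : ℝ),
            Complex.exp (-(u : ℂ)) * (u : ℂ) ^ (a - 1) * H ((u : ℂ) * x) ((u : ℂ) * y))
          = ∫ u in Set.Ioi (0 : ℝ), ∑ m ∈ Finset.range (t₁ + 1), ∑ n ∈ Finset.range (t₂ + 1),
              K m n * (Complex.exp (-(u : ℂ)) * (u : ℂ) ^ (a - 1) * (u : ℂ) ^ (m + n)) from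
          by exact integral_congr_ae (Filter.Eventually.of_forall (fun u => hpt u))]
      rw [integral_finset_sum _ (fun m _ => integrable_finset_sum _ (fun n _ => hint m n))]
      rw [Finset.mul_sum]
      refine Finset.sum_congr rfl fun m _ => ?_
      rw [integral_finset_sum _ (fun n _ => hint m n), Finset.mul_sum]
      refine Finset.sum_congr rfl fun n _ => ?_
      rw [MeasureTheory.integral_const_mul, integral_exp_mul_pow a ha (m + n)]
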